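/- arXiv:2108.02316 — 3 statements merged into one kernel-verified Lean document; each statement's English description precedes it below -/
import Mathlib

section
/- Let α, ε > 0, let p be a probability measure on ℝ^k, let G : ℝ^k → [0,∞) be measurable with ∫ G^{α+ε} dp < ∞, and let c ≥ 0. Then ∫ G(f)^α (1 − exp(−c G(f)^α)) p(df) ≤ (∫ G^{α+ε} dp)^{α/(α+ε)} · (c ∫ G^α dp)^{ε/(α+ε)}. -/
open MeasureTheory

/-- The Hölder-inequality estimate at the heart of Lemma 2 of the paper:
`∫ G^α (1 − e^{−c G^α}) dp ≤ (∫ G^{α+ε} dp)^{α/(α+ε)} (c ∫ G^α dp)^{ε/(α+ε)}`. -/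
theorem holder_truncation_estimate
    (k : ℕ) (α ε : ℝ) (hα : 0 < α) (hε : 0 < ε)
    (p : Measure (EuclideanSpace ℝ (Fin k))) [IsProbabilityMeasure p]
    (G : EuclideanSpace ℝ (Fin k) → ℝ) (hGm : Measurable G) (hG0 : ∀ f, 0 ≤ G f)
    (hint : Integrable (fun f => G f ^ (α + ε)) p)
    (c : ℝ) (hc : 0 ≤ c) :
    ∫ f, G f ^ α * (1 - Real.exp (-(c * G f ^ α))) ∂p
      ≤ (∫ f, G f ^ (α + ε) ∂p) ^ (α / (α + ε))
        * (c * ∫ f, G f ^ α ∂p) ^ (ε / (α + ε)) := by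
  have hαε : 0 < α + ε := by linarith
  set P : ℝ := (α + ε) / α with hP
  set Q : ℝ := (α + ε) / ε with hQ
  have hP1 : 1 < P := by
    rw [hP, lt_div_iff₀ hα]; linarith
  have hQ1 : 1 ≤ Q := by
    rw [hQ, le_div_iff₀ hε]; linarith
  have hconj : P.HolderConjugate Q := by
    rw [Real.holderConjugate_iff]
    constructor
    · exact hP1
    · rw [hP, hQ]
      field_simp
  set g : EuclideanSpace ℝ (Fin k) → ℝ := fun f => 1 - Real.exp (-(c * G f ^ α)) with hg
  have hg0 : ∀ f, 0 ≤ g f := by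
    intro f
    have : Real.exp (-(c * G f ^ α)) ≤ 1 := by
      apply Real.exp_le_one_iff.2
      simp only [neg_nonpos]
      exact mul_nonneg hc (Real.rpow_nonneg (hG0 f) α)
    simp only [hg]; linarith
  have hg1 : ∀ f, g f ≤ 1 := by
    intro f
    have := (Real.exp_pos (-(c * G f ^ α))).le
    simp only [hg]; linarith
  have hgle : ∀ f, g f ≤ c * G f ^ α := by
    intro f
    have := Real.add_one_le_exp (-(c * G f ^ α))
    simp only [hg]; linarith
  have hgm : Measurable g := by
    apply Measurable.const_sub
    exact (((hGm.pow_const α).const_mul c).neg).exp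
  have hGαm : Measurable fun f => G f ^ α := hGm.pow_const α
  -- Memℒp facts
  have hGmem : MemLp G (ENNReal.ofReal (α + ε)) p := by
    have h1 : MemLp (fun x => ‖G x‖ ^ (ENNReal.ofReal (α + ε)).toReal)
        (ENNReal.ofReal (α + ε) / ENNReal.ofReal (α + ε)) p ↔
        MemLp G (ENNReal.ofReal (α + ε)) p :=
      memLp_norm_rpow_iff hGm.aestronglyMeasurable
        (by simp [ENNReal.ofReal_eq_zero, not_le, hαε]) ENNReal.ofReal_ne_top
    rw [← h1]
    have : (ENNReal.ofReal (α + ε) / ENNReal.ofReal (α + ε)) = 1 := by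
      rw [ENNReal.div_self] <;> simp [ENNReal.ofReal_eq_zero, not_le, hαε]
    rw [this, memLp_one_iff_integrable]
    have heq : (fun x => ‖G x‖ ^ (ENNReal.ofReal (α + ε)).toReal)
        = fun x => G x ^ (α + ε) := by
      funext x
      rw [Real.norm_of_nonneg (hG0 x), ENNReal.toReal_ofReal hαε.le]
    rw [heq]; exact hint
  have hf1mem : MemLp (fun f => G f ^ α) (ENNReal.ofReal P) p := by
    have := hGmem.norm_rpow_div (ENNReal.ofReal α)
    have heq : (fun x => ‖G x‖ ^ (ENNReal.ofReal α).toReal) = fun f => G f ^ α := by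
      funext x
      rw [Real.norm_of_nonneg (hG0 x), ENNReal.toReal_ofReal hα.le]
    rw [heq] at this
    have hdiv : ENNReal.ofReal (α + ε) / ENNReal.ofReal α = ENNReal.ofReal P := by
      rw [hP, ENNReal.ofReal_div_of_pos hα]
    rwa [hdiv] at this
  have hgmem : MemLp g (ENNReal.ofReal Q) p := by
    apply MemLp.of_bound hgm.aestronglyMeasurable 1
    filter_upwards with x
    rw [Real.norm_of_nonneg (hg0 x)]
    exact hg1 x
  -- Hölder
  have hHolder := integral_mul_le_Lp_mul_Lq_of_nonneg (μ := p) hconj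
    (Filter.Eventually.of_forall fun x => Real.rpow_nonneg (hG0 x) α)
    (Filter.Eventually.of_forall hg0) hf1mem hgmem
  -- rewrite (G^α)^P = G^(α+ε)
  have hPpow : ∀ x, (G x ^ α) ^ P = G x ^ (α + ε) := by
    intro x
    rw [← Real.rpow_mul (hG0 x)]
    congr 1
    rw [hP]; field_simp
  simp only [hPpow] at hHolder
  -- integrability of G^α
  have hGα_int : Integrable (fun f => G f ^ α) p := by
    apply hf1mem.integrable
    rw [← ENNReal.ofReal_one]
    exact ENNReal.ofReal_le_ofReal hP1.le
  -- bound ∫ g^Q ≤ c * ∫ G^α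
  have hgQ_int : Integrable (fun x => g x ^ Q) p := by
    rw [← memLp_one_iff_integrable]
    apply MemLp.of_bound ((hgm.pow_const Q).aestronglyMeasurable) 1
    filter_upwards with x
    rw [Real.norm_of_nonneg (Real.rpow_nonneg (hg0 x) Q)]
    exact Real.rpow_le_one (hg0 x) (hg1 x) (by positivity)
  have hgQ_le : ∀ x, g x ^ Q ≤ c * G x ^ α := by
    intro x
    have h1 : g x ^ Q ≤ g x := by
      rcases eq_or_lt_of_le (hg0 x) with h | h
      · rw [← h, Real.zero_rpow (by positivity)]
      · calc g x ^ Q ≤ g x ^ (1:ℝ) :=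
              Real.rpow_le_rpow_of_exponent_ge h (hg1 x) hQ1
          _ = g x := Real.rpow_one _
    exact h1.trans (hgle x)
  have hintQ : ∫ x, g x ^ Q ∂p ≤ c * ∫ x, G x ^ α ∂p := by
    rw [← integral_const_mul]
    exact integral_mono hgQ_int (hGα_int.const_mul c) hgQ_le
  have h1P : 1 / P = α / (α + ε) := by rw [hP]; field_simp
  have h1Q : 1 / Q = ε / (α + ε) := by rw [hQ]; field_simp
  rw [h1P, h1Q] at hHolder
  refine hHolder.trans ?_
  apply mul_le_mul_of_nonneg_left
  · exact Real.rpow_le_rpow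
      (integral_nonneg fun x => Real.rpow_nonneg (hg0 x) Q) hintQ (by positivity)
  · exact Real.rpow_nonneg
      (integral_nonneg fun x => Real.rpow_nonneg (hG0 x) _) _
end

section
/- Let α, ε > 0 and c ≥ 0, let (p_n)_{n ≥ 1} be a sequence of probability measures on ℝ^k, and let G : ℝ^k → [0,∞) be measurable with limsup_{n→∞} ∫ G^{α+ε} dp_n < ∞. Then ∫ G(f)^α (1 − exp(−(c/n) G(f)^α)) p_n(df) → 0 as n → ∞. -/
open MeasureTheory Filter

lemma key_ineq (α ε t M x : ℝ) (hα : 0 < α) (hε : 0 < ε) (ht : 0 ≤ t)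
    (hM : 0 < M) (hx : 0 ≤ x) :
    x ^ α * (1 - Real.exp (-(t * x ^ α))) ≤ t * M ^ (2 * α) + x ^ (α + ε) / M ^ ε := by
  have hxα : 0 ≤ x ^ α := Real.rpow_nonneg hx α
  have hdiv : 0 ≤ x ^ (α + ε) / M ^ ε :=
    div_nonneg (Real.rpow_nonneg hx _) (Real.rpow_nonneg hM.le _)
  rcases le_or_gt x M with h | h
  · have h1 : 1 - Real.exp (-(t * x ^ α)) ≤ t * x ^ α := by
      have := Real.add_one_le_exp (-(t * x ^ α)); linarith
    have h2 : x ^ α * (1 - Real.exp (-(t * x ^ α))) ≤ x ^ α * (t * x ^ α) :=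
      mul_le_mul_of_nonneg_left h1 hxα
    have h4 : x ^ α ≤ M ^ α := Real.rpow_le_rpow hx h hα.le
    have h5 : x ^ α * x ^ α ≤ M ^ α * M ^ α :=
      mul_le_mul h4 h4 hxα (Real.rpow_nonneg hM.le α)
    have h6 : M ^ α * M ^ α = M ^ (2 * α) := by
      rw [← Real.rpow_add hM]; ring_nf
    nlinarith
  · have hx0 : 0 < x := hM.trans h
    have h1 : x ^ α * (1 - Real.exp (-(t * x ^ α))) ≤ x ^ α := by
      have := Real.exp_nonneg (-(t * x ^ α))
      nlinarith
    have h3 : x ^ α ≤ x ^ (α + ε) / M ^ ε := by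
      rw [le_div_iff₀ (Real.rpow_pos_of_pos hM ε), Real.rpow_add hx0]
      have : M ^ ε ≤ x ^ ε := Real.rpow_le_rpow hM.le h.le hε.le
      nlinarith [Real.rpow_nonneg hx0.le ε]
    have ht' : 0 ≤ t * M ^ (2 * α) := mul_nonneg ht (Real.rpow_nonneg hM.le _)
    linarith

/-- Lemma 2 of the paper in deterministic form: if `limsup_n ∫ G^{α+ε} dp_n < ∞`, then
`∫ G^α (1 − e^{−(c/n) G^α}) dp_n → 0` as `n → ∞`. -/
theorem truncation_term_tendsto_zero
    (k : ℕ) (α ε c : ℝ) (hα : 0 < α) (hε : 0 < ε) (hc : 0 ≤ c)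
    (p : ℕ → Measure (EuclideanSpace ℝ (Fin k))) (hp : ∀ n, IsProbabilityMeasure (p n))
    (G : EuclideanSpace ℝ (Fin k) → ℝ) (hGm : Measurable G) (hG0 : ∀ f, 0 ≤ G f)
    (hlimsup : limsup (fun n => ∫⁻ f, ENNReal.ofReal (G f ^ (α + ε)) ∂(p n)) atTop < ⊤) :
    Tendsto
      (fun n : ℕ =>
        ∫⁻ f, ENNReal.ofReal (G f ^ α * (1 - Real.exp (-(c / (n : ℝ) * G f ^ α)))) ∂(p n))
      atTop (nhds 0) := by
  rw [ENNReal.tendsto_nhds_zero]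
  intro δ hδ
  rcases eq_or_ne δ ⊤ with rfl | hδt
  · filter_upwards with n using le_top
  -- eventual bound B on the integrals of G^(α+ε)
  obtain ⟨B, hB1, hB2⟩ := exists_between hlimsup
  have hB : ∀ᶠ n in atTop,
      (∫⁻ f, ENNReal.ofReal (G f ^ (α + ε)) ∂(p n)) ≤ B :=
    (eventually_lt_of_limsup_lt hB1).mono fun n h => h.le
  have hδ2 : (0 : ENNReal) < δ / 2 := ENNReal.half_pos hδ.ne'
  have hδ2t : δ / 2 ≠ ⊤ := by
    simp [ENNReal.div_eq_top, hδt]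
  -- choose M
  have hBt : B ≠ ⊤ := hB2.ne
  have hq : B / (δ / 2) ≠ ⊤ := by
    simp [ENNReal.div_eq_top, hBt, hδ2.ne']
  set r : ℝ := (B / (δ / 2)).toReal with hr
  have hr0 : 0 ≤ r := ENNReal.toReal_nonneg
  set A : ℝ := r + 1 with hA
  have hA0 : 0 < A := by positivity
  set M : ℝ := A ^ ε⁻¹ with hMdef
  have hM0 : 0 < M := Real.rpow_pos_of_pos hA0 _
  have hMε : M ^ ε = A := Real.rpow_inv_rpow hA0.le hε.ne'
  have hMεpos : 0 < M ^ ε := Real.rpow_pos_of_pos hM0 _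
  have hMbound : B / ENNReal.ofReal (M ^ ε) ≤ δ / 2 := by
    apply ENNReal.div_le_of_le_mul
    have h1 : B = B / (δ / 2) * (δ / 2) := (ENNReal.div_mul_cancel hδ2.ne' hδ2t).symm
    rw [h1]
    have h2 : B / (δ / 2) ≤ ENNReal.ofReal (M ^ ε) := by
      rw [hMε]
      calc B / (δ / 2) = ENNReal.ofReal r := by rw [hr, ENNReal.ofReal_toReal hq]
        _ ≤ ENNReal.ofReal A := by
            apply ENNReal.ofReal_le_ofReal; simp [hA]
    calc B / (δ / 2) * (δ / 2) ≤ ENNReal.ofReal (M ^ ε) * (δ / 2) :=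
          mul_le_mul_left h2 _
      _ = δ / 2 * ENNReal.ofReal (M ^ ε) := mul_comm _ _
  -- the first term tends to 0
  have htail : ∀ᶠ n : ℕ in atTop,
      ENNReal.ofReal (c / (n : ℝ) * M ^ (2 * α)) < δ / 2 := by
    have h0 : Tendsto (fun n : ℕ => c / (n : ℝ) * M ^ (2 * α)) atTop (nhds 0) := by
      have := tendsto_const_div_atTop_nhds_zero_nat c
      simpa using this.mul_const (M ^ (2 * α))
    have h1 : Tendsto (fun n : ℕ => ENNReal.ofReal (c / (n : ℝ) * M ^ (2 * α)))
        atTop (nhds 0) := by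
      simpa using (ENNReal.tendsto_ofReal h0)
    exact h1.eventually (gt_mem_nhds hδ2)
  filter_upwards [hB, htail] with n hBn htn
  have hn : 0 ≤ c / (n : ℝ) := div_nonneg hc (Nat.cast_nonneg n)
  -- pointwise bound and integrate
  have hstep : (∫⁻ f, ENNReal.ofReal
        (G f ^ α * (1 - Real.exp (-(c / (n : ℝ) * G f ^ α)))) ∂(p n))
      ≤ ∫⁻ f, (ENNReal.ofReal (c / (n : ℝ) * M ^ (2 * α))
          + ENNReal.ofReal (G f ^ (α + ε)) / ENNReal.ofReal (M ^ ε)) ∂(p n) := by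
    apply lintegral_mono
    intro f
    have := key_ineq α ε (c / (n : ℝ)) M (G f) hα hε hn hM0 (hG0 f)
    calc ENNReal.ofReal (G f ^ α * (1 - Real.exp (-(c / (n : ℝ) * G f ^ α))))
        ≤ ENNReal.ofReal (c / (n : ℝ) * M ^ (2 * α) + G f ^ (α + ε) / M ^ ε) :=
          ENNReal.ofReal_le_ofReal this
      _ = ENNReal.ofReal (c / (n : ℝ) * M ^ (2 * α))
          + ENNReal.ofReal (G f ^ (α + ε) / M ^ ε) := by
          rw [ENNReal.ofReal_add (mul_nonneg hn (Real.rpow_nonneg hM0.le _))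
            (div_nonneg (Real.rpow_nonneg (hG0 f) _) hMεpos.le)]
      _ = ENNReal.ofReal (c / (n : ℝ) * M ^ (2 * α))
          + ENNReal.ofReal (G f ^ (α + ε)) / ENNReal.ofReal (M ^ ε) := by
          rw [ENNReal.ofReal_div_of_pos hMεpos]
  have hsplit : (∫⁻ f, (ENNReal.ofReal (c / (n : ℝ) * M ^ (2 * α))
        + ENNReal.ofReal (G f ^ (α + ε)) / ENNReal.ofReal (M ^ ε)) ∂(p n))
      = ENNReal.ofReal (c / (n : ℝ) * M ^ (2 * α))
        + (∫⁻ f, ENNReal.ofReal (G f ^ (α + ε)) ∂(p n)) / ENNReal.ofReal (M ^ ε) := by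
    rw [lintegral_add_left measurable_const, lintegral_const]
    have : (p n) Set.univ = 1 := (hp n).measure_univ
    rw [this, mul_one]
    congr 1
    simp only [div_eq_mul_inv]
    exact lintegral_mul_const' _ _ (by simp [hMεpos])
  have hsecond : (∫⁻ f, ENNReal.ofReal (G f ^ (α + ε)) ∂(p n)) / ENNReal.ofReal (M ^ ε)
      ≤ δ / 2 :=
    le_trans (ENNReal.div_le_div_right hBn _) hMbound
  calc (∫⁻ f, ENNReal.ofReal
        (G f ^ α * (1 - Real.exp (-(c / (n : ℝ) * G f ^ α)))) ∂(p n))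
      ≤ ENNReal.ofReal (c / (n : ℝ) * M ^ (2 * α))
        + (∫⁻ f, ENNReal.ofReal (G f ^ (α + ε)) ∂(p n)) / ENNReal.ofReal (M ^ ε) := by
        rw [← hsplit]; exact hstep
    _ ≤ δ / 2 + δ / 2 := add_le_add htn.le hsecond
    _ = δ := ENNReal.add_halves δ
end

section
/- Let α ∈ (0,2), σ_w, σ_b > 0, let (F_j)_{j ≥ 1} be i.i.d. random vectors in ℝ^k, and let φ : ℝ → ℝ be measurable with E[‖φ∘F_1‖^α] < ∞. Let (w_j)_{j ≥ 1} be i.i.d. real random variables, each symmetric α-stable with scale σ_w, let b be symmetric α-stable with scale σ_b, and assume (F_j), (w_j), b are mutually independent. Define S_n = n^{−1/α} Σ_{j=1}^n w_j (φ∘F_j) + b 𝟏 ∈ ℝ^k. Then for every t ∈ ℝ^k, E[exp(i ⟨S_n, t⟩)] → exp(−σ_b^α |⟨𝟏, t⟩|^α − σ_w^α E[|⟨φ∘F_1, t⟩|^α]) as n → ∞. -/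
open MeasureTheory ProbabilityTheory Filter Topology
open scoped InnerProductSpace

section Helpers

variable {Ω : Type*} [MeasurableSpace Ω] {μ : Measure Ω} [IsProbabilityMeasure μ]

/-- Integral of a product of two independent complex random variables. -/
lemma indep_integral_mul_complex {A B : Ω → ℂ} (h : IndepFun A B μ)
    (hA : Measurable A) (hB : Measurable B) :
    ∫ ω, A ω * B ω ∂μ = (∫ ω, A ω ∂μ) * ∫ ω, B ω ∂μ := by
  have hmap := (indepFun_iff_map_prod_eq_prod_map_map hA.aemeasurable hB.aemeasurable).mp h
  have h1 : ∫ ω, A ω * B ω ∂μ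
      = ∫ p : ℂ × ℂ, p.1 * p.2 ∂(μ.map (fun ω => (A ω, B ω))) :=
    (integral_map (hA.prodMk hB).aemeasurable
      (measurable_fst.mul measurable_snd).aestronglyMeasurable).symm
  have : IsProbabilityMeasure (μ.map A) := Measure.isProbabilityMeasure_map hA.aemeasurable
  have : IsProbabilityMeasure (μ.map B) := Measure.isProbabilityMeasure_map hB.aemeasurable
  have hA' : ∫ x : ℂ, x ∂(μ.map A) = ∫ ω, A ω ∂μ :=
    integral_map (f := fun x : ℂ => x) hA.aemeasurable aestronglyMeasurable_id
  have hB' : ∫ x : ℂ, x ∂(μ.map B) = ∫ ω, B ω ∂μ :=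
    integral_map (f := fun x : ℂ => x) hB.aemeasurable aestronglyMeasurable_id
  rw [h1, hmap, integral_prod_mul (f := fun x : ℂ => x) (g := fun y : ℂ => y), hA', hB']

/-- Integral of a finite product of independent complex random variables. -/
lemma iIndep_integral_prod_complex {ι : Type*} {g : ι → Ω → ℂ}
    (h : iIndepFun g μ) (hm : ∀ i, Measurable (g i))
    (s : Finset ι) :
    ∫ ω, ∏ i ∈ s, g i ω ∂μ = ∏ i ∈ s, ∫ ω, g i ω ∂μ := by
  classical
  induction s using Finset.cons_induction with
  | empty => simp
  | cons a s ha ih =>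
    have hIndep : IndepFun (∏ j ∈ s, g j) (g a) μ :=
      iIndepFun.indepFun_finset_prod_of_notMem h hm ha
    have hprodm : Measurable (∏ j ∈ s, g j) := by
      rw [Finset.prod_fn]
      exact Finset.measurable_prod s fun i _ => hm i
    have : ∫ ω, (∏ j ∈ s, g j) ω * g a ω ∂μ
        = (∫ ω, (∏ j ∈ s, g j) ω ∂μ) * ∫ ω, g a ω ∂μ :=
      indep_integral_mul_complex hIndep hprodm (hm a)
    simp only [Finset.prod_apply] at this
    simp only [Finset.prod_cons]
    rw [← ih]
    calc ∫ ω, g a ω * ∏ i ∈ s, g i ω ∂μ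
        = ∫ ω, (∏ i ∈ s, g i ω) * g a ω ∂μ := by simp [mul_comm]
      _ = (∫ ω, ∏ i ∈ s, g i ω ∂μ) * ∫ ω, g a ω ∂μ := this
      _ = (∫ ω, g a ω ∂μ) * ∫ ω, ∏ i ∈ s, g i ω ∂μ := mul_comm _ _

/-- Fubini for a bounded function of two independent random variables. -/
lemma indep_integral_comp_prod {β γ : Type*} [MeasurableSpace β] [MeasurableSpace γ]
    {X : Ω → β} {Y : Ω → γ} (h : IndepFun X Y μ) (hX : Measurable X) (hY : Measurable Y)
    (H : β × γ → ℂ) (hH : Measurable H) (hb : ∀ p, ‖H p‖ ≤ 1) :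
    ∫ ω, H (X ω, Y ω) ∂μ = ∫ x, ∫ y, H (x, y) ∂(μ.map Y) ∂(μ.map X) := by
  have hmap := (indepFun_iff_map_prod_eq_prod_map_map hX.aemeasurable hY.aemeasurable).mp h
  have hXp : IsProbabilityMeasure (μ.map X) := Measure.isProbabilityMeasure_map hX.aemeasurable
  have hYp : IsProbabilityMeasure (μ.map Y) := Measure.isProbabilityMeasure_map hY.aemeasurable
  have h1 : ∫ ω, H (X ω, Y ω) ∂μ = ∫ p, H p ∂(μ.map (fun ω => (X ω, Y ω))) :=
    (integral_map (hX.prodMk hY).aemeasurable hH.aestronglyMeasurable).symm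
  have hint : Integrable H ((μ.map X).prod (μ.map Y)) := by
    refine (integrable_const (1 : ℝ)).mono' hH.aestronglyMeasurable ?_
    exact Filter.Eventually.of_forall hb
  rw [h1, hmap, MeasureTheory.integral_prod _ hint]

/-- If `n * (u n - 1) → L` then `u n ^ n → exp L`. -/
lemma tendsto_pow_of_tendsto_mul_sub {u : ℕ → ℝ} {L : ℝ}
    (h : Tendsto (fun n : ℕ => (n : ℝ) * (u n - 1)) atTop (𝓝 L)) :
    Tendsto (fun n => u n ^ n) atTop (𝓝 (Real.exp L)) := by
  have h0 : Tendsto (fun n => u n - 1) atTop (𝓝 0) := by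
    have h2 := h.mul tendsto_inv_atTop_nhds_zero_nat
    rw [mul_zero] at h2
    refine h2.congr' ?_
    filter_upwards [eventually_ge_atTop 1] with n hn
    have hne : (n : ℝ) ≠ 0 := Nat.cast_ne_zero.mpr (by omega)
    show (n : ℝ) * (u n - 1) * (n : ℝ)⁻¹ = u n - 1
    rw [mul_comm ((n : ℝ) * (u n - 1)), ← mul_assoc, inv_mul_cancel₀ hne, one_mul]
  have hu1 : Tendsto u atTop (𝓝 1) := by
    have h3 := h0.add (tendsto_const_nhds (x := (1 : ℝ)))
    simp only [zero_add] at h3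
    refine h3.congr fun n => by ring
  have hupos : ∀ᶠ n in atTop, 0 < u n :=
    hu1.eventually (eventually_gt_nhds (by norm_num : (0:ℝ) < 1))
  have hlower : Tendsto (fun n : ℕ => (n : ℝ) * (u n - 1) * (u n)⁻¹) atTop (𝓝 L) := by
    have h4 := h.mul (hu1.inv₀ one_ne_zero)
    simpa using h4
  have hlog : Tendsto (fun n : ℕ => (n : ℝ) * Real.log (u n)) atTop (𝓝 L) := by
    refine tendsto_of_tendsto_of_tendsto_of_le_of_le' hlower h ?_ ?_
    · filter_upwards [hupos] with n hn
      have hinv := Real.log_le_sub_one_of_pos (inv_pos.mpr hn)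
      rw [Real.log_inv] at hinv
      have hge : 1 - (u n)⁻¹ ≤ Real.log (u n) := by linarith
      have : (u n - 1) * (u n)⁻¹ = 1 - (u n)⁻¹ := by field_simp
      calc (n : ℝ) * (u n - 1) * (u n)⁻¹ = (n : ℝ) * ((u n - 1) * (u n)⁻¹) := by ring
        _ ≤ (n : ℝ) * Real.log (u n) := by
            rw [this]; exact mul_le_mul_of_nonneg_left hge (Nat.cast_nonneg n)
    · filter_upwards [hupos] with n hn
      exact mul_le_mul_of_nonneg_left (Real.log_le_sub_one_of_pos hn) (Nat.cast_nonneg n)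
  have hexp := (Real.continuous_exp.tendsto L).comp hlog
  refine hexp.congr' ?_
  filter_upwards [hupos] with n hn
  simp only [Function.comp_apply]
  rw [Real.exp_nat_mul, Real.exp_log hn]

/-- `n * (exp (-y/n) - 1) → -y`. -/
lemma tendsto_nat_mul_exp_div_sub_one (y : ℝ) :
    Tendsto (fun n : ℕ => (n : ℝ) * (Real.exp (-y / n) - 1)) atTop (𝓝 (-y)) := by
  have hd : HasDerivAt (fun h : ℝ => Real.exp (-y * h)) (-y) 0 := by
    have := ((hasDerivAt_id (0:ℝ)).const_mul (-y)).exp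
    simpa using this
  have hslope := hasDerivAt_iff_tendsto_slope.mp hd
  have hseq : Tendsto (fun n : ℕ => ((n : ℝ))⁻¹) atTop (𝓝[≠] (0:ℝ)) := by
    rw [tendsto_nhdsWithin_iff]
    refine ⟨tendsto_inv_atTop_nhds_zero_nat, ?_⟩
    filter_upwards [eventually_ge_atTop 1] with n hn
    have : (n : ℝ) ≠ 0 := Nat.cast_ne_zero.mpr (by omega)
    simpa [Set.mem_setOf_eq] using inv_ne_zero this
  have := hslope.comp hseq
  refine this.congr' ?_
  filter_upwards [eventually_ge_atTop 1] with n hn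
  have hne : (n : ℝ) ≠ 0 := Nat.cast_ne_zero.mpr (by omega)
  simp only [Function.comp_apply, slope_def_field]
  rw [div_eq_iff (by simpa using inv_ne_zero hne)]
  field_simp
  simp

end Helpers

/-- Shallow (one-layer) case of Theorem 2 of the paper: for i.i.d. random vectors `F_j` in
`ℝ^k`, i.i.d. symmetric α-stable weights `w_j` (scale `σ_w`) and an independent symmetric
α-stable bias `b` (scale `σ_b`), with `E[‖φ∘F_1‖^α] < ∞`, the characteristic function of
`S_n = n^{-1/α} Σ_{j=1}^n w_j (φ∘F_j) + b 𝟏` converges pointwise to that of the limiting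
multivariate α-stable law. -/
theorem stable_shallow_limit_charFun
    {Ω : Type*} [MeasurableSpace Ω] (μ : Measure Ω) [IsProbabilityMeasure μ]
    (α σw σb : ℝ) (hα0 : 0 < α) (hα2 : α < 2) (hσw : 0 < σw) (hσb : 0 < σb)
    (k : ℕ) (φ : ℝ → ℝ) (hφ : Measurable φ)
    (φv : EuclideanSpace ℝ (Fin k) → EuclideanSpace ℝ (Fin k))
    (hφv : ∀ x r, φv x r = φ (x r))
    (F : ℕ → Ω → EuclideanSpace ℝ (Fin k)) (hFmeas : ∀ j, Measurable (F j))
    (hFindep : iIndepFun F μ)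
    (hFid : ∀ j, IdentDistrib (F j) (F 0) μ μ)
    (hφint : Integrable (fun ω => ‖φv (F 0 ω)‖ ^ α) μ)
    (w : ℕ → Ω → ℝ) (b : Ω → ℝ)
    (hwmeas : ∀ j, Measurable (w j)) (hbmeas : Measurable b)
    (hwbindep : iIndepFun
      (fun i : Option ℕ => (i.elim b w : Ω → ℝ)) μ)
    (hw : ∀ j, ∀ s : ℝ, ∫ ω, Complex.exp (Complex.I * (s : ℂ) * (w j ω : ℂ)) ∂μ
        = Complex.exp ((-(σw ^ α * |s| ^ α) : ℝ) : ℂ))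
    (hb : ∀ s : ℝ, ∫ ω, Complex.exp (Complex.I * (s : ℂ) * (b ω : ℂ)) ∂μ
        = Complex.exp ((-(σb ^ α * |s| ^ α) : ℝ) : ℂ))
    (hcross : IndepFun (fun ω => fun j => F j ω)
      (fun ω => ((fun j => w j ω), b ω)) μ)
    (ones : EuclideanSpace ℝ (Fin k)) (hones : ∀ i, ones i = 1)
    (S : ℕ → Ω → EuclideanSpace ℝ (Fin k))
    (hS : ∀ n ω, S n ω = ((n : ℝ) ^ (-(1 / α))) •
        (∑ j ∈ Finset.range n, w j ω • φv (F j ω)) + b ω • ones)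
    (t : EuclideanSpace ℝ (Fin k)) :
    Tendsto (fun n => ∫ ω, Complex.exp (Complex.I * ((⟪S n ω, t⟫_ℝ : ℝ) : ℂ)) ∂μ)
      atTop
      (𝓝 (Complex.exp ((-(σb ^ α * |⟪ones, t⟫_ℝ| ^ α
        + σw ^ α * ∫ ω, |⟪φv (F 0 ω), t⟫_ℝ| ^ α ∂μ) : ℝ) : ℂ))) := by
  classical
  -- basic measurability
  have hφvm : Measurable φv := by
    have hfe : φv = fun x => (WithLp.toLp 2 (fun r => φ (x r)) : EuclideanSpace ℝ (Fin k)) := by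
      funext x; ext r; exact hφv x r
    rw [hfe]
    exact (WithLp.measurable_toLp 2 _).comp (measurable_pi_lambda _ fun r =>
      hφ.comp ((measurable_pi_apply r).comp (WithLp.measurable_ofLp 2 _)))
  have hinner : Measurable fun x : EuclideanSpace ℝ (Fin k) => ⟪x, t⟫_ℝ :=
    (continuous_id.inner continuous_const).measurable
  set c : ℝ := σw ^ α with hc
  have hc0 : 0 ≤ c := (Real.rpow_pos_of_pos hσw α).le
  set X : Ω → ℝ := fun ω => |⟪φv (F 0 ω), t⟫_ℝ| ^ α with hXdef
  have hXm : Measurable X :=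
    (Real.continuous_rpow_const hα0.le).measurable.comp (hinner.comp (hφvm.comp (hFmeas 0))).abs
  have hX0 : ∀ ω, 0 ≤ X ω := fun ω => Real.rpow_nonneg (abs_nonneg _) α
  have hXint : Integrable X μ := by
    refine (hφint.mul_const (‖t‖ ^ α)).mono' hXm.aestronglyMeasurable ?_
    refine Filter.Eventually.of_forall fun ω => ?_
    rw [Real.norm_eq_abs, abs_of_nonneg (hX0 ω)]
    calc X ω ≤ (‖φv (F 0 ω)‖ * ‖t‖) ^ α :=
          Real.rpow_le_rpow (abs_nonneg _) (abs_real_inner_le_norm _ _) hα0.le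
      _ = ‖φv (F 0 ω)‖ ^ α * ‖t‖ ^ α := Real.mul_rpow (norm_nonneg _) (norm_nonneg _)
  set Bc : ℝ := σb ^ α * |⟪ones, t⟫_ℝ| ^ α with hBcdef
  set Iseq : ℕ → ℝ := fun n => ∫ ω, Real.exp (-(c * X ω) / n) ∂μ with hIseq
  -- the key identity
  have hkey : ∀ n : ℕ, 1 ≤ n →
      ∫ ω, Complex.exp (Complex.I * ((⟪S n ω, t⟫_ℝ : ℝ) : ℂ)) ∂μ
        = ((Real.exp (-Bc) * Iseq n ^ n : ℝ) : ℂ) := by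
    intro n hn
    have hnR : (0 : ℝ) < n := by exact_mod_cast hn
    set a : ℝ := (n : ℝ) ^ (-(1 / α)) with ha
    have ha0 : 0 ≤ a := Real.rpow_nonneg hnR.le _
    have habs : ∀ u : ℝ, σw ^ α * |a * u| ^ α = c * |u| ^ α / n := by
      intro u
      rw [abs_mul, abs_of_nonneg ha0, Real.mul_rpow ha0 (abs_nonneg u)]
      have haα : a ^ α = ((n : ℝ))⁻¹ := by
        rw [ha, ← Real.rpow_mul hnR.le]
        rw [show (-(1 / α)) * α = -1 by field_simp]
        exact Real.rpow_neg_one _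
      rw [haα, hc]
      ring
    have hSin : ∀ ω, ⟪S n ω, t⟫_ℝ
        = a * ∑ j ∈ Finset.range n, w j ω * ⟪φv (F j ω), t⟫_ℝ + b ω * ⟪ones, t⟫_ℝ := by
      intro ω
      rw [hS]
      rw [inner_add_left, real_inner_smul_left, real_inner_smul_left, sum_inner]
      congr 1
      congr 1
      exact Finset.sum_congr rfl fun j _ => real_inner_smul_left _ _ _
    set X₁ : Ω → (ℕ → EuclideanSpace ℝ (Fin k)) := fun ω j => F j ω with hX₁
    set Y₁ : Ω → (ℕ → ℝ) × ℝ := fun ω => (fun j => w j ω, b ω) with hY₁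
    have hX₁m : Measurable X₁ := measurable_pi_lambda _ hFmeas
    have hY₁m : Measurable Y₁ := (measurable_pi_lambda _ hwmeas).prodMk hbmeas
    set H : (ℕ → EuclideanSpace ℝ (Fin k)) × ((ℕ → ℝ) × ℝ) → ℂ := fun p =>
      Complex.exp (Complex.I * ((a * ∑ j ∈ Finset.range n, p.2.1 j * ⟪φv (p.1 j), t⟫_ℝ
        + p.2.2 * ⟪ones, t⟫_ℝ : ℝ) : ℂ)) with hHdef
    have hHm : Measurable H := by
      apply Complex.measurable_exp.comp
      apply Measurable.const_mul
      apply Complex.measurable_ofReal.comp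
      apply Measurable.add
      · apply Measurable.const_mul
        apply Finset.measurable_sum
        intro j _
        exact ((measurable_pi_apply j).comp (measurable_fst.comp measurable_snd)).mul
          ((hinner.comp hφvm).comp ((measurable_pi_apply j).comp measurable_fst))
      · exact (measurable_snd.comp measurable_snd).mul_const _
    have hHb : ∀ p, ‖H p‖ ≤ 1 := by
      intro p
      rw [hHdef]
      simp only []
      rw [mul_comm, Complex.norm_exp_ofReal_mul_I]
    have hint1 : ∫ ω, Complex.exp (Complex.I * ((⟪S n ω, t⟫_ℝ : ℝ) : ℂ)) ∂μ
        = ∫ x, ∫ y, H (x, y) ∂(μ.map Y₁) ∂(μ.map X₁) := by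
      rw [← indep_integral_comp_prod hcross hX₁m hY₁m H hHm hHb]
      congr 1
      funext ω
      rw [hSin ω]
    set e : EuclideanSpace ℝ (Fin k) → ℝ := fun x => Real.exp (-(c * |⟪φv x, t⟫_ℝ| ^ α) / n)
      with he
    have hem : Measurable e :=
      Real.measurable_exp.comp
        ((((Real.continuous_rpow_const hα0.le).measurable.comp
          (hinner.comp hφvm).abs).const_mul c).neg.div_const _)
    have hinner_int : ∀ f : ℕ → EuclideanSpace ℝ (Fin k),
        ∫ y, H (f, y) ∂(μ.map Y₁)
          = ((Real.exp (-Bc) : ℝ) : ℂ) * ∏ j ∈ Finset.range n, ((e (f j) : ℝ) : ℂ) := by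
      intro f
      have habs' : ∀ u : ℝ, c * |a * u| ^ α = c * |u| ^ α / n := by
        intro u
        rw [hc]
        exact habs u
      have h1 : ∫ y, H (f, y) ∂(μ.map Y₁) = ∫ ω, H (f, Y₁ ω) ∂μ :=
        integral_map hY₁m.aemeasurable
          (hHm.comp measurable_prodMk_left).aestronglyMeasurable
      set d : Option ℕ → ℝ :=
        fun i => i.elim (⟪ones, t⟫_ℝ) (fun j => a * ⟪φv (f j), t⟫_ℝ) with hd
      have hdm : ∀ i : Option ℕ, Measurable (fun r : ℝ =>
          Complex.exp (Complex.I * ((d i : ℝ) : ℂ) * (r : ℂ))) := fun i =>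
        Complex.measurable_exp.comp
          ((Complex.measurable_ofReal.const_mul _))
      have hGm : ∀ i : Option ℕ, Measurable (i.elim b w : Ω → ℝ) := by
        rintro (_ | j)
        · exact hbmeas
        · exact hwmeas j
      have h2 : ∀ ω, H (f, Y₁ ω)
          = ∏ i ∈ Finset.insertNone (Finset.range n),
              Complex.exp (Complex.I * ((d i : ℝ) : ℂ) * (((i.elim b w : Ω → ℝ) ω : ℝ) : ℂ)) := by
        intro ω
        rw [Finset.prod_insertNone]
        simp only [Option.elim_none, Option.elim_some, hd, hHdef, hY₁]
        rw [← Complex.exp_sum, ← Complex.exp_add]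
        congr 1
        push_cast
        rw [mul_add, add_comm]
        congr 1
        · ring
        · rw [Finset.mul_sum, Finset.mul_sum]
          exact Finset.sum_congr rfl fun j _ => by ring
      rw [h1]
      calc ∫ ω, H (f, Y₁ ω) ∂μ
          = ∫ ω, ∏ i ∈ Finset.insertNone (Finset.range n),
              Complex.exp (Complex.I * ((d i : ℝ) : ℂ)
                * (((i.elim b w : Ω → ℝ) ω : ℝ) : ℂ)) ∂μ := by
            exact integral_congr_ae (Filter.Eventually.of_forall h2)
        _ = ∏ i ∈ Finset.insertNone (Finset.range n),
              ∫ ω, Complex.exp (Complex.I * ((d i : ℝ) : ℂ)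
                * (((i.elim b w : Ω → ℝ) ω : ℝ) : ℂ)) ∂μ := by
            refine iIndep_integral_prod_complex ?_ ?_ _
            · exact hwbindep.comp
                (fun i r => Complex.exp (Complex.I * ((d i : ℝ) : ℂ) * (r : ℂ))) hdm
            · exact fun i => (hdm i).comp (hGm i)
        _ = ((Real.exp (-Bc) : ℝ) : ℂ) * ∏ j ∈ Finset.range n, ((e (f j) : ℝ) : ℂ) := by
            rw [Finset.prod_insertNone]
            congr 1
            · simp only [Option.elim_none, hd]
              rw [hb (⟪ones, t⟫_ℝ), ← Complex.ofReal_exp]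
            · refine Finset.prod_congr rfl fun j _ => ?_
              simp only [Option.elim_some, hd]
              rw [hw j (a * ⟪φv (f j), t⟫_ℝ), ← Complex.ofReal_exp, he]
              norm_cast
              show Real.exp (-(c * |a * ⟪φv (f j), t⟫_ℝ| ^ α))
                = Real.exp (-(c * |⟪φv (f j), t⟫_ℝ| ^ α) / ↑n)
              rw [habs' (⟪φv (f j), t⟫_ℝ), neg_div]
    rw [hint1]
    have hFprodm : Measurable fun x : ℕ → EuclideanSpace ℝ (Fin k) =>
        ∏ j ∈ Finset.range n, ((e (x j) : ℝ) : ℂ) :=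
      Finset.measurable_prod _ fun j _ =>
        Complex.measurable_ofReal.comp (hem.comp (measurable_pi_apply j))
    calc ∫ x, ∫ y, H (x, y) ∂(μ.map Y₁) ∂(μ.map X₁)
        = ∫ x, ((Real.exp (-Bc) : ℝ) : ℂ)
            * ∏ j ∈ Finset.range n, ((e (x j) : ℝ) : ℂ) ∂(μ.map X₁) := by
          congr 1
          funext x
          exact hinner_int x
      _ = ((Real.exp (-Bc) : ℝ) : ℂ)
            * ∫ x, ∏ j ∈ Finset.range n, ((e (x j) : ℝ) : ℂ) ∂(μ.map X₁) :=
          integral_const_mul _ _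
      _ = ((Real.exp (-Bc) : ℝ) : ℂ)
            * ∫ ω, ∏ j ∈ Finset.range n, ((e (F j ω) : ℝ) : ℂ) ∂μ := by
          rw [integral_map hX₁m.aemeasurable hFprodm.aestronglyMeasurable]
      _ = ((Real.exp (-Bc) : ℝ) : ℂ)
            * ∏ j ∈ Finset.range n, ∫ ω, ((e (F j ω) : ℝ) : ℂ) ∂μ := by
          congr 1
          exact iIndep_integral_prod_complex
            (hFindep.comp (fun j x => ((e x : ℝ) : ℂ))
              (fun j => Complex.measurable_ofReal.comp hem))
            (fun j => Complex.measurable_ofReal.comp (hem.comp (hFmeas j))) _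
      _ = ((Real.exp (-Bc) : ℝ) : ℂ) * (∫ ω, ((e (F 0 ω) : ℝ) : ℂ) ∂μ) ^ n := by
          have hid : ∀ j : ℕ, ∫ ω, ((e (F j ω) : ℝ) : ℂ) ∂μ
              = ∫ ω, ((e (F 0 ω) : ℝ) : ℂ) ∂μ := fun j =>
            ((hFid j).comp (Complex.measurable_ofReal.comp hem)).integral_eq
          rw [Finset.prod_congr rfl (fun j _ => hid j), Finset.prod_const, Finset.card_range]
      _ = ((Real.exp (-Bc) * Iseq n ^ n : ℝ) : ℂ) := by
          have hIr : Iseq n = ∫ ω, e (F 0 ω) ∂μ := by simp only [hIseq, hXdef, he]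
          have hco : ∫ ω, ((e (F 0 ω) : ℝ) : ℂ) ∂μ = ((∫ ω, e (F 0 ω) ∂μ : ℝ) : ℂ) := by
            exact integral_ofReal (𝕜 := ℂ) (μ := μ) (f := fun ω => e (F 0 ω))
          rw [hIr, hco]
          push_cast
          ring
  -- the limit
  have hexpm : ∀ n : ℕ, Measurable fun ω => Real.exp (-(c * X ω) / n) := fun n =>
    Real.measurable_exp.comp ((hXm.const_mul c).neg.div_const _)
  have hmullim : Tendsto (fun n : ℕ => (n : ℝ) * (Iseq n - 1)) atTop
      (𝓝 (-(c * ∫ ω, X ω ∂μ))) := by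
    have hrw : ∀ n : ℕ, (n : ℝ) * (Iseq n - 1)
        = ∫ ω, (n : ℝ) * (Real.exp (-(c * X ω) / n) - 1) ∂μ := by
      intro n
      have hint : Integrable (fun ω => Real.exp (-(c * X ω) / n)) μ := by
        refine (integrable_const (1 : ℝ)).mono' (hexpm n).aestronglyMeasurable ?_
        refine Filter.Eventually.of_forall fun ω => ?_
        rw [Real.norm_eq_abs, abs_of_pos (Real.exp_pos _), Real.exp_le_one_iff]
        exact div_nonpos_of_nonpos_of_nonneg (neg_nonpos.mpr (mul_nonneg hc0 (hX0 ω)))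
          (Nat.cast_nonneg n)
      rw [integral_const_mul, integral_sub hint (integrable_const 1), integral_const]
      simp [hIseq]
    have hbound : ∀ n : ℕ, ∀ ω,
        ‖(n : ℝ) * (Real.exp (-(c * X ω) / n) - 1)‖ ≤ c * X ω := by
      intro n ω
      have hz0 : 0 ≤ c * X ω := mul_nonneg hc0 (hX0 ω)
      have hle1 : Real.exp (-(c * X ω) / n) ≤ 1 := by
        rw [Real.exp_le_one_iff]
        exact div_nonpos_of_nonpos_of_nonneg (neg_nonpos.mpr hz0) (Nat.cast_nonneg n)
      rw [Real.norm_eq_abs, abs_mul, Nat.abs_cast, abs_of_nonpos (by linarith)]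
      rcases Nat.eq_zero_or_pos n with h0 | h1
      · simp [h0, hz0]
      · have hnR : (0 : ℝ) < n := by exact_mod_cast h1
        have hexp_ge : 1 - Real.exp (-(c * X ω) / n) ≤ c * X ω / n := by
          have h2 := Real.add_one_le_exp (-(c * X ω) / n)
          have h3 : -(c * X ω / n) ≤ -(1 - Real.exp (-(c * X ω) / n)) := by
            rw [neg_div] at h2 ⊢
            linarith
          linarith
        calc (n : ℝ) * -(Real.exp (-(c * X ω) / n) - 1)
            = (n : ℝ) * (1 - Real.exp (-(c * X ω) / n)) := by ring
          _ ≤ (n : ℝ) * (c * X ω / n) := mul_le_mul_of_nonneg_left hexp_ge (Nat.cast_nonneg n)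
          _ = c * X ω := by field_simp
    have hDCT : Tendsto (fun n : ℕ => ∫ ω, (n : ℝ) * (Real.exp (-(c * X ω) / n) - 1) ∂μ)
        atTop (𝓝 (∫ ω, -(c * X ω) ∂μ)) := by
      refine tendsto_integral_of_dominated_convergence (fun ω => c * X ω)
        (fun n => ((measurable_const.mul ((hexpm n).sub_const 1)).aestronglyMeasurable))
        (hXint.const_mul c) (fun n => Filter.Eventually.of_forall (hbound n)) ?_
      refine Filter.Eventually.of_forall fun ω => ?_
      exact tendsto_nat_mul_exp_div_sub_one (c * X ω)
    have hIv : ∫ ω, -(c * X ω) ∂μ = -(c * ∫ ω, X ω ∂μ) := by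
      rw [integral_neg, integral_const_mul]
    rw [hIv] at hDCT
    exact hDCT.congr fun n => (hrw n).symm
  have hpow := tendsto_pow_of_tendsto_mul_sub hmullim
  have hreal : Tendsto (fun n : ℕ => Real.exp (-Bc) * Iseq n ^ n) atTop
      (𝓝 (Real.exp (-Bc) * Real.exp (-(c * ∫ ω, X ω ∂μ)))) := tendsto_const_nhds.mul hpow
  have hfinal := (Complex.continuous_ofReal.tendsto _).comp hreal
  have hlim_eq : ((Real.exp (-Bc) * Real.exp (-(c * ∫ ω, X ω ∂μ)) : ℝ) : ℂ)
      = Complex.exp ((-(σb ^ α * |⟪ones, t⟫_ℝ| ^ α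
        + σw ^ α * ∫ ω, |⟪φv (F 0 ω), t⟫_ℝ| ^ α ∂μ) : ℝ) : ℂ) := by
    rw [← Real.exp_add, ← Complex.ofReal_exp]
    congr 1
    rw [hBcdef, hc, hXdef]
    ring
  rw [← hlim_eq]
  refine Tendsto.congr' ?_ hfinal
  filter_upwards [eventually_ge_atTop 1] with n hn
  exact (hkey n hn).symm
end
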